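/- Let θ₁, …, θₙ be nonzero real numbers with ∑ᵢ 1/θᵢ = 1, and let u₁, …, uₙ be elements of a real inner product space. Then ‖∑ᵢ uᵢ‖² = ∑ᵢ θᵢ‖uᵢ‖² − ∑_{i<j} (1/(θᵢθⱼ))‖θᵢuᵢ − θⱼuⱼ‖². -/

import Mathlib

open InnerProductSpace

lemma pair_sum {M : Type*} [AddCommMonoid M] {n : ℕ} (g : Fin n → Fin n → M) :
    ∑ i, ∑ j, g i j
      = (∑ i, g i i) + ∑ i, ∑ j ∈ Finset.univ.filter (fun j => i < j), (g i j + g j i) := by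
  have key : ∀ (f : Fin n → Fin n → M),
      ∑ p ∈ (Finset.univ ×ˢ Finset.univ : Finset (Fin n × Fin n)).filter (fun p => p.1 < p.2), f p.1 p.2
        = ∑ i, ∑ j ∈ Finset.univ.filter (fun j => i < j), f i j := by
    intro f
    rw [Finset.sum_filter, Finset.sum_product]
    simp [Finset.sum_filter]
  have split : ∑ i, ∑ j, g i j
      = ∑ p ∈ (Finset.univ ×ˢ Finset.univ : Finset (Fin n × Fin n)), g p.1 p.2 := by
    rw [Finset.sum_product]
  have hdiag : ∑ p ∈ ((Finset.univ ×ˢ Finset.univ : Finset (Fin n × Fin n)).filter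
        (fun p => ¬ p.1 < p.2)).filter (fun p => ¬ p.2 < p.1), g p.1 p.2 = ∑ i, g i i := by
    rw [Finset.filter_filter]
    refine Finset.sum_nbij' (fun p => p.1) (fun i => (i, i)) ?_ ?_ ?_ ?_ ?_
    · intro p hp; simp
    · intro i hi; simp
    · intro p hp
      simp only [Finset.mem_filter, Finset.mem_product, Finset.mem_univ, true_and, not_lt] at hp
      have : p.1 = p.2 := le_antisymm hp.2 hp.1
      ext <;> simp [this]
    · intro i hi; rfl
    · intro p hp
      simp only [Finset.mem_filter, Finset.mem_product, Finset.mem_univ, true_and, not_lt] at hp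
      have : p.1 = p.2 := le_antisymm hp.2 hp.1
      simp [this]
  have hswap : ∑ p ∈ ((Finset.univ ×ˢ Finset.univ : Finset (Fin n × Fin n)).filter
        (fun p => ¬ p.1 < p.2)).filter (fun p => p.2 < p.1), g p.1 p.2
      = ∑ p ∈ (Finset.univ ×ˢ Finset.univ : Finset (Fin n × Fin n)).filter
        (fun p => p.1 < p.2), g p.2 p.1 := by
    rw [Finset.filter_filter]
    refine Finset.sum_nbij' (fun p => (p.2, p.1)) (fun p => (p.2, p.1)) ?_ ?_ ?_ ?_ ?_
    · intro p hp
      simp only [Finset.mem_filter, Finset.mem_product, Finset.mem_univ, true_and, not_lt] at hp ⊢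
      exact hp.2
    · intro p hp
      simp only [Finset.mem_filter, Finset.mem_product, Finset.mem_univ, true_and, not_lt] at hp ⊢
      exact ⟨hp.le, hp⟩
    · intro p hp; rfl
    · intro p hp; rfl
    · intro p hp; rfl
  rw [split,
    ← Finset.sum_filter_add_sum_filter_not
      (Finset.univ ×ˢ Finset.univ : Finset (Fin n × Fin n)) (fun p => p.1 < p.2),
    ← Finset.sum_filter_add_sum_filter_not
      ((Finset.univ ×ˢ Finset.univ : Finset (Fin n × Fin n)).filter (fun p => ¬ p.1 < p.2))
      (fun p => p.2 < p.1),
    hdiag, hswap, key, key (fun i j => g j i)]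
  simp only [Finset.sum_add_distrib]
  abel

lemma alg_key {n : ℕ} (θ : Fin n → ℝ) (hθ : ∀ i, θ i ≠ 0) (hsum : ∑ i, 1 / θ i = 1)
    (a : Fin n → Fin n → ℝ) (hsymm : ∀ i j, a j i = a i j) :
    ∑ i, ∑ j, a i j
      = ∑ i, θ i * a i i
        - ∑ i, ∑ j ∈ Finset.univ.filter (fun j => i < j),
            (1 / (θ i * θ j)) * (θ i * θ i * a i i - 2 * (θ i * θ j) * a i j + θ j * θ j * a j j) := by
  set g : Fin n → Fin n → ℝ := fun i j => (θ i / θ j) * a i i with hg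
  have hG : ∑ i, ∑ j, g i j = ∑ i, θ i * a i i := by
    refine Finset.sum_congr rfl fun i _ => ?_
    calc ∑ j, g i j = ∑ j, (1 / θ j) * (θ i * a i i) := by
          refine Finset.sum_congr rfl fun j _ => ?_
          simp only [hg]; ring
      _ = (∑ j, 1 / θ j) * (θ i * a i i) := by rw [← Finset.sum_mul]
      _ = θ i * a i i := by rw [hsum]; ring
  have hterm : ∀ i, ∑ j ∈ Finset.univ.filter (fun j => i < j),
        (1 / (θ i * θ j)) * (θ i * θ i * a i i - 2 * (θ i * θ j) * a i j + θ j * θ j * a j j)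
      = ∑ j ∈ Finset.univ.filter (fun j => i < j), ((g i j + g j i) - (a i j + a j i)) := by
    intro i
    refine Finset.sum_congr rfl fun j _ => ?_
    simp only [hg]
    rw [hsymm j i]
    have hi := hθ i
    have hj := hθ j
    field_simp
    ring
  simp only [hterm, Finset.sum_sub_distrib]
  have h1 := pair_sum g
  have h2 := pair_sum a
  rw [hG] at h1
  have hgd : ∑ i, g i i = ∑ i, a i i :=
    Finset.sum_congr rfl fun i _ => by simp [hg, div_self (hθ i)]
  rw [hgd] at h1
  linarith [h1, h2]

theorem stmt2 {H : Type*} [NormedAddCommGroup H] [InnerProductSpace ℝ H]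
    (n : ℕ) (θ : Fin n → ℝ) (hθ : ∀ i, θ i ≠ 0) (hsum : ∑ i, 1 / θ i = 1)
    (u : Fin n → H) :
    ‖∑ i, u i‖ ^ 2
      = ∑ i, θ i * ‖u i‖ ^ 2
        - ∑ i, ∑ j ∈ Finset.univ.filter (fun j => i < j),
            (1 / (θ i * θ j)) * ‖θ i • u i - θ j • u j‖ ^ 2 := by
  set a : Fin n → Fin n → ℝ := fun i j => inner ℝ (u i) (u j) with ha
  have hsymm : ∀ i j, a j i = a i j := fun i j => real_inner_comm _ _
  have hL : ‖∑ i, u i‖ ^ 2 = ∑ i, ∑ j, a i j := by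
    rw [← real_inner_self_eq_norm_sq, sum_inner]
    exact Finset.sum_congr rfl fun i _ => inner_sum _ _ _
  have hN : ∀ i, ‖u i‖ ^ 2 = a i i := fun i => (real_inner_self_eq_norm_sq _).symm
  have hT : ∀ i j, ‖θ i • u i - θ j • u j‖ ^ 2
      = θ i * θ i * a i i - 2 * (θ i * θ j) * a i j + θ j * θ j * a j j := by
    intro i j
    rw [← real_inner_self_eq_norm_sq]
    simp only [inner_sub_left, inner_sub_right, real_inner_smul_left, real_inner_smul_right, ha]
    rw [real_inner_comm (u j) (u i)]
    ring
  simp only [hL, hN, hT]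
  exact alg_key θ hθ hsum a hsymm
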